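/- Let {·,·}′ be the bracket on smooth functions on ℝ⁶ defined by the antisymmetric matrix Π′ with upper entries Π′(x₁,x₂) = −x₃², Π′(x₁,x₃) = x₃x₂, Π′(x₁,J₁) = −x₂J₁, Π′(x₁,J₂) = −x₂J₂, Π′(x₁,J₃) = x₃J₂ − 2x₂J₃, Π′(x₂,x₃) = −x₃x₁, Π′(x₂,J₁) = x₁J₁, Π′(x₂,J₂) = x₁J₂, Π′(x₂,J₃) = 2x₁J₃ − x₃J₁, Π′(x₃,J₁) = 0, Π′(x₃,J₂) = 0, Π′(x₃,J₃) = −x₁J₂ + x₂J₁, Π′(J₁,J₂) = −J₁² − J₂², Π′(J₁,J₃) = −J₃J₂, Π′(J₂,J₃) = J₁J₃. Let C₁ = x₁²+x₂²+x₃² and C₂ = x₁J₁+x₂J₂+x₃J₃. Then {C₁, z}′ = 0 identically on ℝ⁶ for each coordinate function z ∈ {x₁,x₂,x₃,J₁,J₂,J₃}, and {C₂, z}′ = 0 at every point where x₁J₁+x₂J₂+x₃J₃ = 0. In particular Π′ has the same symplectic-leaf foliation as the e*(3) Lie–Poisson structure on the level set C₂ = 0. -/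

import Mathlib

/-- Partial derivative of a function on ℝ⁶ in the `i`-th coordinate direction. -/
noncomputable def pd (i : Fin 6) (f : (Fin 6 → ℝ) → ℝ) (z : Fin 6 → ℝ) : ℝ :=
  fderiv ℝ f z (Pi.single i 1)

/-- The e*(3) Lie–Poisson matrix in coordinates z = (x₁,x₂,x₃,J₁,J₂,J₃). -/
noncomputable def e3Poisson (z : Fin 6 → ℝ) : Matrix (Fin 6) (Fin 6) ℝ :=
  !![0, 0, 0, 0, z 2, -z 1;
     0, 0, 0, -z 2, 0, z 0;
     0, 0, 0, z 1, -z 0, 0;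
     0, z 2, -z 1, 0, z 5, -z 4;
     -z 2, 0, z 0, -z 5, 0, z 4;
     z 1, -z 0, 0, z 4, -z 3, 0]

/-- The second Poisson matrix Π′ of the Goryachev–Chaplygin top in the e*(3)
variables z = (x₁,x₂,x₃,J₁,J₂,J₃). -/
noncomputable def GCP6 (z : Fin 6 → ℝ) : Matrix (Fin 6) (Fin 6) ℝ :=
  !![0, -(z 2) ^ 2, z 2 * z 1, -(z 1 * z 3), -(z 1 * z 4), z 2 * z 4 - 2 * z 1 * z 5;
     (z 2) ^ 2, 0, -(z 2 * z 0), z 0 * z 3, z 0 * z 4, 2 * z 0 * z 5 - z 2 * z 3;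
     -(z 2 * z 1), z 2 * z 0, 0, 0, 0, -(z 0 * z 4) + z 1 * z 3;
     z 1 * z 3, -(z 0 * z 3), 0, 0, -(z 3) ^ 2 - (z 4) ^ 2, -(z 5 * z 4);
     z 1 * z 4, -(z 0 * z 4), 0, (z 3) ^ 2 + (z 4) ^ 2, 0, z 3 * z 5;
     -(z 2 * z 4 - 2 * z 1 * z 5), -(2 * z 0 * z 5 - z 2 * z 3),
       -(-(z 0 * z 4) + z 1 * z 3), z 5 * z 4, -(z 3 * z 5), 0]

/-- The bracket {f,g}′ associated with the matrix Π′ on ℝ⁶. -/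
noncomputable def GCBr6 (f g : (Fin 6 → ℝ) → ℝ) (z : Fin 6 → ℝ) : ℝ :=
  ∑ i : Fin 6, ∑ j : Fin 6, pd i f z * GCP6 z i j * pd j g z

lemma hasFDerivAt_coord (k : Fin 6) (z : Fin 6 → ℝ) :
    HasFDerivAt (fun w : Fin 6 → ℝ => w k)
      (ContinuousLinearMap.proj k : (Fin 6 → ℝ) →L[ℝ] ℝ) z :=
  (ContinuousLinearMap.proj (R := ℝ) (φ := fun _ : Fin 6 => ℝ) k).hasFDerivAt

lemma pd_coord (j k : Fin 6) (z : Fin 6 → ℝ) :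
    pd j (fun w => w k) z = (Pi.single j 1 : Fin 6 → ℝ) k := by
  rw [pd, (hasFDerivAt_coord k z).fderiv]
  rfl

lemma pd_C1 (i : Fin 6) (z : Fin 6 → ℝ) :
    pd i (fun w : Fin 6 → ℝ => (w 0) ^ 2 + (w 1) ^ 2 + (w 2) ^ 2) z =
      2 * z 0 * (Pi.single i 1 : Fin 6 → ℝ) 0 + 2 * z 1 * (Pi.single i 1 : Fin 6 → ℝ) 1 +
        2 * z 2 * (Pi.single i 1 : Fin 6 → ℝ) 2 := by
  have heq : (fun w : Fin 6 → ℝ => (w 0) ^ 2 + (w 1) ^ 2 + (w 2) ^ 2) =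
      fun w : Fin 6 → ℝ => w 0 * w 0 + w 1 * w 1 + w 2 * w 2 := by
    funext w; ring
  have h : HasFDerivAt (fun w : Fin 6 → ℝ => w 0 * w 0 + w 1 * w 1 + w 2 * w 2) _ z := (((hasFDerivAt_coord 0 z).mul (hasFDerivAt_coord 0 z)).add
    ((hasFDerivAt_coord 1 z).mul (hasFDerivAt_coord 1 z))).add
    ((hasFDerivAt_coord 2 z).mul (hasFDerivAt_coord 2 z))
  rw [pd, heq, h.fderiv]
  simp [ContinuousLinearMap.proj]
  ring

lemma pd_C2 (i : Fin 6) (z : Fin 6 → ℝ) :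
    pd i (fun w : Fin 6 → ℝ => w 0 * w 3 + w 1 * w 4 + w 2 * w 5) z =
      z 3 * (Pi.single i 1 : Fin 6 → ℝ) 0 + z 0 * (Pi.single i 1 : Fin 6 → ℝ) 3 +
        z 4 * (Pi.single i 1 : Fin 6 → ℝ) 1 + z 1 * (Pi.single i 1 : Fin 6 → ℝ) 4 +
        z 5 * (Pi.single i 1 : Fin 6 → ℝ) 2 + z 2 * (Pi.single i 1 : Fin 6 → ℝ) 5 := by
  have h : HasFDerivAt (fun w : Fin 6 → ℝ => w 0 * w 3 + w 1 * w 4 + w 2 * w 5) _ z := (((hasFDerivAt_coord 0 z).mul (hasFDerivAt_coord 3 z)).add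
    ((hasFDerivAt_coord 1 z).mul (hasFDerivAt_coord 4 z))).add
    ((hasFDerivAt_coord 2 z).mul (hasFDerivAt_coord 5 z))
  rw [pd, h.fderiv]
  simp [ContinuousLinearMap.proj]
  ring

set_option maxHeartbeats 1000000 in
/-- C₁ = x₁²+x₂²+x₃² is a Casimir of {·,·}′ everywhere, and C₂ = x·J satisfies
{C₂, z}′ = 0 at every point of the level set C₂ = 0: Π′ has the same
symplectic-leaf foliation as the e*(3) structure on C₂ = 0. -/
theorem GCP6_casimirs :
    (∀ z : Fin 6 → ℝ, ∀ i : Fin 6,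
      GCBr6 (fun w => (w 0) ^ 2 + (w 1) ^ 2 + (w 2) ^ 2) (fun w => w i) z = 0) ∧
    (∀ z : Fin 6 → ℝ, z 0 * z 3 + z 1 * z 4 + z 2 * z 5 = 0 →
      ∀ i : Fin 6,
        GCBr6 (fun w => w 0 * w 3 + w 1 * w 4 + w 2 * w 5) (fun w => w i) z = 0) := by
  constructor
  · intro z i
    simp only [GCBr6, Fin.sum_univ_six, pd_C1, pd_coord, Pi.single_apply,
      Fin.reduceEq, reduceIte]
    simp only [GCP6, Matrix.cons_val_zero, Matrix.cons_val_one, Matrix.head_cons,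
      Matrix.cons_val_two, Matrix.vecTail, Matrix.vecHead, Matrix.cons_val_three,
      Matrix.cons_val_four, show (5 : Fin 6) = (4 : Fin 5).succ from rfl, Matrix.cons_val_succ,
      Matrix.cons_val', Matrix.empty_val', Matrix.cons_val_fin_one, Matrix.of_apply,
      Function.comp_apply]
    simp only [show (Fin.succ 4 : Fin 6) = 5 from rfl]
    ring
  · intro z h i
    simp only [GCBr6, Fin.sum_univ_six, pd_C2, pd_coord, Pi.single_apply,
      Fin.reduceEq, reduceIte]
    simp only [GCP6, Matrix.cons_val_zero, Matrix.cons_val_one, Matrix.head_cons,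
      Matrix.cons_val_two, Matrix.vecTail, Matrix.vecHead, Matrix.cons_val_three,
      Matrix.cons_val_four, show (5 : Fin 6) = (4 : Fin 5).succ from rfl, Matrix.cons_val_succ,
      Matrix.cons_val', Matrix.empty_val', Matrix.cons_val_fin_one, Matrix.of_apply,
      Function.comp_apply]
    simp only [show (Fin.succ 4 : Fin 6) = 5 from rfl]
    linear_combination
      ((if i = 0 then (1:ℝ) else 0) * z 1 - (if i = 1 then (1:ℝ) else 0) * z 0 +
       (if i = 3 then (1:ℝ) else 0) * z 4 - (if i = 4 then (1:ℝ) else 0) * z 3) * h
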